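/- Let M and N be quasi zigzag persistence modules and let ε ≥ 0 be an integer such that for every center p ∈ ZZ × ℤ and every width δ ≥ 0, rk^M(⊞²_δ(p)) ≥ rk^N(⊞²_{δ+ε}(p)) and rk^N(⊞²_δ(p)) ≥ rk^M(⊞²_{δ+ε}(p)). Then |λ^M(p,k) − λ^N(p,k)| ≤ ε for every p ∈ ZZ × ℤ and every k ≥ 1. -/

import Mathlib

open CategoryTheory CategoryTheory.Limits
open scoped ENNReal

noncomputable section

/-- The zigzag poset `ZZ`, the subposet of `ℤᵒᵖ × ℤ` of points `(i,j)` with `j ∈ {i, i-1}`. -/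
def ZZSet : Set (ℤᵒᵈ × ℤ) :=
  {p | p.2 = OrderDual.ofDual p.1 ∨ p.2 = OrderDual.ofDual p.1 - 1}

/-- The quasi zigzag poset `ZZ × ℤ` with the product order. -/
def QZ : Type := ↥ZZSet × ℤ

instance : PartialOrder QZ := inferInstanceAs (PartialOrder (↥ZZSet × ℤ))

/-- the `ZZ`-component of a point of the quasi zigzag poset -/
def QZ.zz (p : QZ) : ↥ZZSet := (show ↥ZZSet × ℤ from p).1

/-- the `ℤ`-component of a point of the quasi zigzag poset -/
def QZ.t (p : QZ) : ℤ := (show ↥ZZSet × ℤ from p).2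

/-- The identification of `ZZ × ℤ` with `ℤ²` as sets: consecutive elements of `ZZ`
are indexed by consecutive x-coordinates. -/
def toZ2 (p : QZ) : ℤ × ℤ := (OrderDual.ofDual p.zz.val.1 + p.zz.val.2, p.t)

/-- the `∞`-distance on `ℤ²` -/
def dInf (a b : ℤ × ℤ) : ℤ := max |a.1 - b.1| |a.2 - b.2|

/-- the `δ`-square of points of `ZZ × ℤ` centered at the `ℤ²`-point `c` -/
def sqAt (c : ℤ × ℤ) (δ : ℤ) : Set QZ := {z | dInf c (toZ2 z) ≤ δ}

/-- The worm centered at `p` with width `δ`: the union of the `δ`-square at `p` with the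
`δ`-squares centered at `p ± (δ, -δ)`. -/
def worm (p : QZ) (δ : ℤ) : Set QZ :=
  sqAt (toZ2 p) δ ∪ sqAt (toZ2 p + (δ, -δ)) δ ∪ sqAt (toZ2 p - (δ, -δ)) δ

lemma center_mem_worm (p : QZ) {δ : ℤ} (hδ : 0 ≤ δ) : p ∈ worm p δ :=
  Or.inl (Or.inl (by simp [sqAt, dInf, hδ]))

/-- the restriction of a persistence module to a subposet, viewed in the category of all
`𝕜`-vector spaces -/
def restrictV {𝕜 : Type} [Field 𝕜] {P : Type} [PartialOrder P]
    (M : P ⥤ FGModuleCat 𝕜) (S : Set P) : ↥S ⥤ ModuleCat 𝕜 :=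
  Monotone.functor (f := (Subtype.val : ↥S → P)) (fun _ _ h => h) ⋙ M ⋙ forget₂ _ _

/-- the canonical limit-to-colimit map of the restriction of `M` to `S`, computed through
the point `p` (it is independent of `p` when `S` is connected) -/
def limToColim {𝕜 : Type} [Field 𝕜] {P : Type} [PartialOrder P]
    (M : P ⥤ FGModuleCat 𝕜) (S : Set P) (p : ↥S) :
    (limit (restrictV M S) : ModuleCat 𝕜) →ₗ[𝕜] (colimit (restrictV M S) : ModuleCat 𝕜) :=
  (limit.π (restrictV M S) p ≫ colimit.ι (restrictV M S) p).hom

/-- the generalized rank of `M` over the subposet `S`, computed through the point `p` -/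
def genRankAt {𝕜 : Type} [Field 𝕜] {P : Type} [PartialOrder P]
    (M : P ⥤ FGModuleCat 𝕜) (S : Set P) (p : ↥S) : ℕ :=
  Module.finrank 𝕜 (LinearMap.range (limToColim M S p))

/-- the generalized rank of `M` over the worm centered at `p` with width `δ ≥ 0` -/
def wormRank {𝕜 : Type} [Field 𝕜] (M : QZ ⥤ FGModuleCat 𝕜) (p : QZ) (δ : ℕ) : ℕ :=
  genRankAt M (worm p (δ : ℤ)) ⟨p, center_mem_worm p (by exact_mod_cast Nat.zero_le δ)⟩

/-- the two-sided rank comparison condition defining the erosion distance over worms -/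
def ErosionCond {𝕜 : Type} [Field 𝕜] (M N : QZ ⥤ FGModuleCat 𝕜) (ε : ℕ) : Prop :=
  ∀ (p : QZ) (δ : ℕ),
    wormRank N p (δ + ε) ≤ wormRank M p δ ∧ wormRank M p (δ + ε) ≤ wormRank N p δ

/-- The ZigZag Generalized Rank Invariant Landscape:
`λ^M(p,k) = sup {δ ≥ 0 : rk^M(⊞²_δ(p)) ≥ k}`. -/
def zzGril {𝕜 : Type} [Field 𝕜] (M : QZ ⥤ FGModuleCat 𝕜) (p : QZ) (k : ℕ) : ℕ∞ :=
  sSup {e : ℕ∞ | ∃ δ : ℕ, k ≤ wormRank M p δ ∧ e = (δ : ℕ∞)}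

/-- the sup-norm distance between two landscapes, over all centers `p` and all `k ≥ 1` -/
def lamDist {𝕜 : Type} [Field 𝕜] (M N : QZ ⥤ FGModuleCat 𝕜) : ℕ∞ :=
  sSup {e : ℕ∞ | ∃ (p : QZ) (k : ℕ), 1 ≤ k ∧
    e = (zzGril M p k - zzGril N p k) ⊔ (zzGril N p k - zzGril M p k)}

/-- If `ε ≥ 0` is an integer such that for every center `p` and width
`δ ≥ 0` the two-sided rank comparison between `M` and `N` holds at offset `ε`, then
`|λ^M(p,k) − λ^N(p,k)| ≤ ε` for every `p` and every `k ≥ 1`. -/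
theorem statement_16 {𝕜 : Type} [Field 𝕜] (M N : QZ ⥤ FGModuleCat 𝕜) (ε : ℕ)
    (h : ErosionCond M N ε) :
    ∀ (p : QZ) (k : ℕ), 1 ≤ k →
      (zzGril M p k - zzGril N p k) ⊔ (zzGril N p k - zzGril M p k) ≤ (ε : ℕ∞) := by
  have key : ∀ (A B : QZ ⥤ FGModuleCat 𝕜),
      (∀ (p : QZ) (δ : ℕ), wormRank A p (δ + ε) ≤ wormRank B p δ) →
      ∀ (p : QZ) (k : ℕ), zzGril A p k ≤ zzGril B p k + (ε : ℕ∞) := by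
    intro A B hAB p k
    apply sSup_le
    rintro e ⟨δ, hk, rfl⟩
    by_cases hδ : ε ≤ δ
    · have hδ' : δ = (δ - ε) + ε := (Nat.sub_add_cancel hδ).symm
      have hk' : k ≤ wormRank B p (δ - ε) := le_trans (hδ' ▸ hk) (hAB p (δ - ε))
      have hmem : ((δ - ε : ℕ) : ℕ∞) ≤ zzGril B p k := le_sSup ⟨δ - ε, hk', rfl⟩
      calc ((δ : ℕ) : ℕ∞) = ((δ - ε : ℕ) : ℕ∞) + (ε : ℕ∞) := by
            rw [← Nat.cast_add, ← hδ']
        _ ≤ zzGril B p k + (ε : ℕ∞) := add_le_add hmem le_rfl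
    · have : ((δ : ℕ) : ℕ∞) ≤ (ε : ℕ∞) := by
        exact_mod_cast le_of_lt (Nat.lt_of_not_le hδ)
      exact le_trans this (le_add_self)
  intro p k _
  apply sup_le
  · rw [tsub_le_iff_right, add_comm]
    exact key M N (fun q δ => (h q δ).2) p k
  · rw [tsub_le_iff_right, add_comm]
    exact key N M (fun q δ => (h q δ).1) p k

end
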